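/- Let Q : [0, ∞) → [0, ∞) be continuous, strictly increasing, Q(0) = 0, Q(t) → ∞, and let G : [0, ∞) → ℝ^m be bounded, measurable and continuous. With G^ε defined as the exponential average G_t^ε = (1/Q(ε)) ∫_{t∨ε}^∞ e^{−(Q(r)−Q(t∨ε))/Q(ε)} G(r) dQ(r), one has for every T > 0: sup_{s∈[0,T]} |G_s^ε − G_s| → 0 as ε → 0⁺. -/

import Mathlib

open MeasureTheory Filter

section ExpSmoothingAux

open Set Real Function

set_option maxHeartbeats 1000000




lemma leftLim_eq_self {f : ℝ → ℝ} (hf : Continuous f) (x : ℝ) :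
    Function.leftLim f x = f x := by
  apply leftLim_eq_of_tendsto
  · exact (hf.tendsto x).mono_left nhdsWithin_le_nhds

lemma Qsurj (Q : StieltjesFunction ℝ) (hQc : Continuous Q) (hQ0 : Q 0 = 0)
    (hQtop : Tendsto (fun t => Q t) atTop atTop) {y : ℝ} (hy : 0 ≤ y) :
    ∃ x, 0 ≤ x ∧ Q x = y := by
  obtain ⟨z, hz⟩ := (hQtop.eventually_ge_atTop y).exists
  have hz0 : y ≤ Q (max z 0) := le_trans hz (Q.mono (le_max_left _ _))
  have hmem : y ∈ Set.Icc (Q 0) (Q (max z 0)) := ⟨hQ0.symm ▸ hy, hz0⟩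
  obtain ⟨x, hx, hxy⟩ := intermediate_value_Icc (le_max_right z 0) hQc.continuousOn hmem
  exact ⟨x, hx.1, hxy⟩

lemma Qmap (Q : StieltjesFunction ℝ) (hQc : Continuous Q)
    (hQmono : StrictMonoOn Q (Set.Ici 0)) (hQ0 : Q 0 = 0)
    (hQtop : Tendsto (fun t => Q t) atTop atTop) {t : ℝ} (ht : 0 ≤ t) :
    Measure.map Q (Q.measure.restrict (Set.Ici t)) = volume.restrict (Set.Ici (Q t)) := by
  have hQm : Measurable Q := hQc.measurable
  have key : ∀ a b : ℝ, a < b → Measure.map Q (Q.measure.restrict (Set.Ici t)) (Ioc a b)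
      = volume.restrict (Set.Ici (Q t)) (Ioc a b) := fun a b hab => by
    rw [Measure.map_apply hQm measurableSet_Ioc, Measure.restrict_apply (hQm measurableSet_Ioc),
      Measure.restrict_apply measurableSet_Ioc]
    have hRHS : volume (Ioc a b ∩ Ici (Q t)) = ENNReal.ofReal (b - max a (Q t)) := by
      apply le_antisymm
      · refine le_trans (measure_mono (fun x ⟨⟨h1,h2⟩,h3⟩ => ⟨max_le (le_of_lt h1) h3, h2⟩ :
          Ioc a b ∩ Ici (Q t) ⊆ Icc (max a (Q t)) b)) ?_
        rw [Real.volume_Icc]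
      · refine le_trans ?_ (measure_mono (fun x ⟨h1,h2⟩ =>
          ⟨⟨lt_of_le_of_lt (le_max_left _ _) h1, h2⟩, le_of_lt (lt_of_le_of_lt (le_max_right _ _) h1)⟩ :
          Ioc (max a (Q t)) b ⊆ Ioc a b ∩ Ici (Q t)))
        rw [Real.volume_Ioc]
    rw [hRHS]
    set y0 := (Q t : ℝ)
    have hy0 : 0 ≤ y0 := hQ0 ▸ Q.mono ht
    by_cases hb : b ≤ y0
    · -- both sides are 0
      have h1 : Q ⁻¹' Ioc a b ∩ Ici t ⊆ {t} := by
        intro x ⟨hx1, hx2⟩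
        simp only [mem_preimage, mem_Ioc] at hx1
        have hxt : y0 ≤ Q x := Q.mono hx2
        have hqx : Q x = y0 := le_antisymm (hx1.2.trans hb) hxt
        have : x ≤ t := by
          by_contra h
          exact absurd hqx (ne_of_gt (hQmono ht (le_trans ht (le_of_lt (lt_of_not_ge h))) (lt_of_not_ge h)))
        exact le_antisymm this hx2
      have h0 : Q.measure (Q ⁻¹' Ioc a b ∩ Ici t) = 0 := by
        refine measure_mono_null h1 ?_
        rw [Q.measure_singleton, leftLim_eq_self hQc, sub_self, ENNReal.ofReal_zero]
      rw [h0, ENNReal.ofReal_eq_zero.mpr (by simp [le_max_of_le_right hb])]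
    · push_neg at hb
      -- choose α, β
      obtain ⟨β, hβ0, hβ⟩ := Qsurj Q hQc hQ0 hQtop (le_of_lt (lt_of_le_of_lt hy0 hb))
      obtain ⟨α, hα0, hα⟩ := Qsurj Q hQc hQ0 hQtop (le_trans hy0 (le_max_right a y0))
      have htα : t ≤ α := by
        by_contra h
        push_neg at h
        exact absurd (hα.symm ▸ le_max_right a y0 : y0 ≤ Q α)
          (not_le_of_gt (hQmono hα0 ht h))
      have hαβ : α ≤ β := by
        by_contra h
        push_neg at h
        have := hQmono hβ0 hα0 h
        rw [hα, hβ] at this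
        exact absurd this (not_lt_of_ge (max_le (le_of_lt hab) (le_of_lt hb)))
      have hsub1 : Ioo α β ⊆ Q ⁻¹' Ioc a b ∩ Ici t := by
        intro x ⟨h1, h2⟩
        refine ⟨?_, le_trans htα (le_of_lt h1)⟩
        have hx0 : 0 ≤ x := le_trans hα0 (le_of_lt h1)
        have hQl : Q α < Q x := hQmono hα0 hx0 h1
        have hQr : Q x < Q β := hQmono hx0 hβ0 h2
        simp only [mem_preimage, mem_Ioc]
        exact ⟨lt_of_le_of_lt (hα ▸ le_max_left a y0 : a ≤ Q α) hQl, le_of_lt (hβ ▸ hQr)⟩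
      have hsub2 : Q ⁻¹' Ioc a b ∩ Ici t ⊆ Icc α β := by
        intro x ⟨hx1, hx2⟩
        simp only [mem_preimage, mem_Ioc] at hx1
        have hx0 : 0 ≤ x := le_trans ht hx2
        constructor
        · by_contra h
          push_neg at h
          have hlt := hQmono hx0 hα0 h
          rw [hα] at hlt
          exact absurd (max_le (le_of_lt hx1.1) (Q.mono hx2)) (not_le_of_gt hlt)
        · by_contra h
          push_neg at h
          have := hQmono hβ0 hx0 h
          rw [hβ] at this
          exact absurd hx1.2 (not_le_of_gt this)
      have hmeas : Q.measure (Q ⁻¹' Ioc a b ∩ Ici t) = ENNReal.ofReal (b - max a y0) := by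
        apply le_antisymm
        · refine le_trans (measure_mono hsub2) ?_
          rw [Q.measure_Icc, leftLim_eq_self hQc, hα, hβ]
        · refine le_trans ?_ (measure_mono hsub1)
          rw [Q.measure_Ioo, leftLim_eq_self hQc, hα, hβ]
      rw [hmeas]
  refine Measure.ext_of_Ioc' _ _ (fun a b hab => ?_) key
  rw [key a b hab, Measure.restrict_apply measurableSet_Ioc]
  exact ne_of_lt (lt_of_le_of_lt (measure_mono (inter_subset_left))
    (by rw [Real.volume_Ioc]; exact ENNReal.ofReal_lt_top))



-- volume integral of the exponential weight
lemma vol_weight {y0 c : ℝ} (hc : 0 < c) :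
    ∫ x in Ici y0, Real.exp (-(x - y0)/c) = c := by
  rw [MeasureTheory.integral_Ici_eq_integral_Ioi]
  have h1 : ∀ x : ℝ, Real.exp (-(x - y0)/c) = Real.exp (y0/c) * Real.exp (-(c⁻¹ * x)) := by
    intro x
    rw [← Real.exp_add]
    congr 1
    field_simp
    ring
  simp_rw [h1]
  rw [MeasureTheory.integral_const_mul,
    integral_comp_mul_left_Ioi (fun u => Real.exp (-u)) y0 (inv_pos.mpr hc),
    integral_exp_neg_Ioi, smul_eq_mul, inv_inv]
  rw [mul_comm c, ← mul_assoc, ← Real.exp_add]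
  have : y0 / c + -(c⁻¹ * y0) = 0 := by field_simp; ring
  rw [this, Real.exp_zero, one_mul]

lemma vol_weight_integrable {y0 c : ℝ} (hc : 0 < c) :
    IntegrableOn (fun x => Real.exp (-(x - y0)/c)) (Ici y0) volume := by
  rw [integrableOn_Ici_iff_integrableOn_Ioi]
  have h1 : ∀ x : ℝ, Real.exp (-(x - y0)/c) = Real.exp (y0/c) * Real.exp (-c⁻¹ * x) := by
    intro x
    rw [← Real.exp_add]; congr 1; field_simp; ring
  simp_rw [h1]
  exact Integrable.const_mul (exp_neg_integrableOn_Ioi y0 (inv_pos.mpr hc)) _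

lemma Qweight_integrable (Q : StieltjesFunction ℝ) (hQc : Continuous Q)
    (hQmono : StrictMonoOn Q (Set.Ici 0)) (hQ0 : Q 0 = 0)
    (hQtop : Tendsto (fun t => Q t) atTop atTop) {t c : ℝ} (ht : 0 ≤ t) (hc : 0 < c) :
    IntegrableOn (fun r => Real.exp (-(Q r - Q t)/c)) (Ici t) Q.measure := by
  have hmap := Qmap Q hQc hQmono hQ0 hQtop ht
  have hg : Continuous (fun x : ℝ => Real.exp (-(x - Q t)/c)) := by continuity
  have := (integrable_map_measure hg.aestronglyMeasurable hQc.measurable.aemeasurable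
    (f := Q) (μ := Q.measure.restrict (Ici t))).mp ?_
  · exact this
  · rw [hmap]; exact vol_weight_integrable hc

lemma Qweight_integral (Q : StieltjesFunction ℝ) (hQc : Continuous Q)
    (hQmono : StrictMonoOn Q (Set.Ici 0)) (hQ0 : Q 0 = 0)
    (hQtop : Tendsto (fun t => Q t) atTop atTop) {t c : ℝ} (ht : 0 ≤ t) (hc : 0 < c) :
    ∫ r in Ici t, Real.exp (-(Q r - Q t)/c) ∂Q.measure = c := by
  have hmap := Qmap Q hQc hQmono hQ0 hQtop ht
  have hg : Continuous (fun x : ℝ => Real.exp (-(x - Q t)/c)) := by continuity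
  have h := integral_map (φ := Q) (μ := Q.measure.restrict (Ici t))
    hQc.measurable.aemeasurable (f := fun x => Real.exp (-(x - Q t)/c))
    hg.aestronglyMeasurable
  rw [hmap] at h
  rw [← h, vol_weight hc]


lemma modulus {E : Type*} [NormedAddCommGroup E] {K : Set ℝ} (hK : IsCompact K)
    {G : ℝ → E} (hGc : Continuous G) {q : ℝ → ℝ} (hq : Continuous q)
    (hinj : ∀ x ∈ K, ∀ y ∈ K, q x = q y → x = y) {η : ℝ} (hη : 0 < η) :
    ∃ δ > 0, ∀ x ∈ K, ∀ y ∈ K, |q x - q y| ≤ δ → ‖G x - G y‖ ≤ η := by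
  set S : Set (ℝ × ℝ) := (K ×ˢ K) ∩ {p | η ≤ ‖G p.1 - G p.2‖} with hS
  have hSc : IsCompact S := (hK.prod hK).inter_right
    (isClosed_le continuous_const ((hGc.comp continuous_fst).sub (hGc.comp continuous_snd)).norm)
  rcases S.eq_empty_or_nonempty with hSe | hSne
  · refine ⟨1, one_pos, fun x hx y hy _ => ?_⟩
    by_contra h
    have hmem : (x, y) ∈ S := ⟨⟨hx, hy⟩, le_of_lt (lt_of_not_ge h)⟩
    rw [hSe] at hmem
    exact absurd hmem (notMem_empty _)
  · have hcont : ContinuousOn (fun p : ℝ × ℝ => |q p.1 - q p.2|) S :=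
      (((hq.comp continuous_fst).sub (hq.comp continuous_snd)).abs).continuousOn
    obtain ⟨p0, hp0, hmin⟩ := hSc.exists_isMinOn hSne hcont
    set δ0 := |q p0.1 - q p0.2|
    have hδ0 : 0 < δ0 := by
      rcases lt_or_eq_of_le (abs_nonneg (q p0.1 - q p0.2)) with h | h
      · exact h
      · exfalso
        have hqeq : q p0.1 = q p0.2 := by
          have := sub_eq_zero.mp (abs_eq_zero.mp h.symm)
          linarith [this]
        have heq := hinj _ hp0.1.1 _ hp0.1.2 hqeq
        have h2 : η ≤ ‖G p0.1 - G p0.2‖ := hp0.2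
        rw [heq, sub_self, norm_zero] at h2
        exact absurd h2 (not_le_of_gt hη)
    refine ⟨δ0 / 2, by linarith, fun x hx y hy hle => ?_⟩
    by_contra h
    have hmem : (x, y) ∈ S := ⟨⟨hx, hy⟩, le_of_lt (lt_of_not_ge h)⟩
    have := hmin hmem
    simp only [δ0] at this hle
    have : |q p0.1 - q p0.2| ≤ |q x - q y| := this
    linarith


lemma smooth_close (m : ℕ) (Q : StieltjesFunction ℝ) (hQc : Continuous Q)
    (hQmono : StrictMonoOn Q (Set.Ici 0)) (hQ0 : Q 0 = 0)
    (hQtop : Tendsto (fun t => Q t) atTop atTop)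
    (G : ℝ → EuclideanSpace ℝ (Fin m)) (hGc : Continuous G)
    (C : ℝ) (hC : 0 ≤ C) (hbdd : ∀ r, ‖G r‖ ≤ C)
    {t c δ η' : ℝ} (ht : 0 ≤ t) (hc : 0 < c) (hδ : 0 < δ) (hη' : 0 < η')
    (hmod : ∀ r, t ≤ r → Q r - Q t ≤ δ → ‖G r - G t‖ ≤ η') :
    ‖(c⁻¹ • ∫ r in Ici t, Real.exp (-(Q r - Q t)/c) • G r ∂Q.measure) - G t‖
      ≤ η' + 4*C*Real.exp (-δ/(2*c)) := by
  set w : ℝ → ℝ := fun r => Real.exp (-(Q r - Q t)/c) with hw_def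
  set v : ℝ → ℝ := fun r => Real.exp (-(Q r - Q t)/(2*c)) with hv_def
  have h2c : 0 < 2*c := by linarith
  have hw : IntegrableOn w (Ici t) Q.measure := Qweight_integrable Q hQc hQmono hQ0 hQtop ht hc
  have hwint : ∫ r in Ici t, w r ∂Q.measure = c := Qweight_integral Q hQc hQmono hQ0 hQtop ht hc
  have hv : IntegrableOn v (Ici t) Q.measure := Qweight_integrable Q hQc hQmono hQ0 hQtop ht h2c
  have hvint : ∫ r in Ici t, v r ∂Q.measure = 2*c := Qweight_integral Q hQc hQmono hQ0 hQtop ht h2c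
  have hwc : Continuous w := by
    apply Real.continuous_exp.comp
    exact ((hQc.sub continuous_const).neg).div_const c
  have hwG : IntegrableOn (fun r => w r • G r) (Ici t) Q.measure := by
    refine Integrable.mono' (hw.const_mul C) ((hwc.smul hGc).aestronglyMeasurable) ?_
    refine ae_of_all _ fun r => ?_
    rw [norm_smul, Real.norm_eq_abs, abs_of_pos (Real.exp_pos _)]
    calc w r * ‖G r‖ ≤ w r * C := by
          exact mul_le_mul_of_nonneg_left (hbdd r) (le_of_lt (Real.exp_pos _))
      _ = C * w r := mul_comm _ _
  have hwGt : IntegrableOn (fun r => w r • G t) (Ici t) Q.measure := hw.smul_const (G t)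
  -- rewrite the difference
  have key : (c⁻¹ • ∫ r in Ici t, w r • G r ∂Q.measure) - G t
      = c⁻¹ • ∫ r in Ici t, w r • (G r - G t) ∂Q.measure := by
    have h1 : (fun r => w r • (G r - G t)) = fun r => w r • G r - w r • G t :=
      funext fun r => smul_sub _ _ _
    rw [h1, integral_sub hwG hwGt, integral_smul_const, hwint, smul_sub, smul_smul,
      inv_mul_cancel₀ (ne_of_gt hc), one_smul]
  rw [key, norm_smul, Real.norm_eq_abs, abs_of_pos (inv_pos.mpr hc)]
  -- bound the integral norm
  have hbound : ‖∫ r in Ici t, w r • (G r - G t) ∂Q.measure‖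
      ≤ ∫ r in Ici t, (η' * w r + (2*C*Real.exp (-δ/(2*c))) * v r) ∂Q.measure := by
    refine le_trans (norm_integral_le_integral_norm _) ?_
    have heq : ∀ r, ‖w r • (G r - G t)‖ = w r * ‖G r - G t‖ := fun r => by
      rw [norm_smul, Real.norm_eq_abs, abs_of_pos (Real.exp_pos _)]
    simp_rw [heq]
    refine setIntegral_mono_on ?_ ?_ measurableSet_Ici ?_
    · refine Integrable.mono' (hw.const_mul (2*C)) ?_ (ae_of_all _ fun r => ?_)
      · exact (hwc.mul (hGc.sub continuous_const).norm).aestronglyMeasurable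
      · rw [Real.norm_eq_abs, abs_of_nonneg (mul_nonneg (le_of_lt (Real.exp_pos _)) (norm_nonneg _))]
        calc w r * ‖G r - G t‖ ≤ w r * (2*C) := by
              refine mul_le_mul_of_nonneg_left ?_ (le_of_lt (Real.exp_pos _))
              calc ‖G r - G t‖ ≤ ‖G r‖ + ‖G t‖ := norm_sub_le _ _
                _ ≤ C + C := add_le_add (hbdd r) (hbdd t)
                _ = 2*C := by ring
          _ = 2*C * w r := mul_comm _ _
    · exact (hw.const_mul η').add (hv.const_mul _)
    · intro r hr
      by_cases hQr : Q r - Q t ≤ δ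
      · have h1 : w r * ‖G r - G t‖ ≤ η' * w r := by
          rw [mul_comm (η' : ℝ)]
          exact mul_le_mul_of_nonneg_left (hmod r hr hQr) (le_of_lt (Real.exp_pos _))
        have h2 : 0 ≤ (2*C*Real.exp (-δ/(2*c))) * v r :=
          mul_nonneg (mul_nonneg (by linarith) (le_of_lt (Real.exp_pos _))) (le_of_lt (Real.exp_pos _))
        linarith
      · push_neg at hQr
        have harith : -(Q r - Q t)/c = -(Q r - Q t)/(2*c) + -(Q r - Q t)/(2*c) := by
          field_simp
          ring
        have hsplit : w r = Real.exp (-(Q r - Q t)/(2*c)) * v r := by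
          show Real.exp (-(Q r - Q t)/c)
            = Real.exp (-(Q r - Q t)/(2*c)) * Real.exp (-(Q r - Q t)/(2*c))
          rw [harith, Real.exp_add]
        have hexp : Real.exp (-(Q r - Q t)/(2*c)) ≤ Real.exp (-δ/(2*c)) := by
          apply Real.exp_le_exp.mpr
          exact (div_le_div_iff_of_pos_right h2c).mpr (by linarith)
        have h1 : w r * ‖G r - G t‖ ≤ (2*C*Real.exp (-δ/(2*c))) * v r := by
          calc w r * ‖G r - G t‖ ≤ w r * (2*C) := by
                refine mul_le_mul_of_nonneg_left ?_ (le_of_lt (Real.exp_pos _))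
                calc ‖G r - G t‖ ≤ ‖G r‖ + ‖G t‖ := norm_sub_le _ _
                  _ ≤ C + C := add_le_add (hbdd r) (hbdd t)
                  _ = 2*C := by ring
            _ = Real.exp (-(Q r - Q t)/(2*c)) * v r * (2*C) := by rw [← hsplit]
            _ ≤ Real.exp (-δ/(2*c)) * v r * (2*C) := by
                refine mul_le_mul_of_nonneg_right (mul_le_mul_of_nonneg_right hexp
                  (le_of_lt (Real.exp_pos _))) (by linarith)
            _ = (2*C*Real.exp (-δ/(2*c))) * v r := by ring
        have h2 : 0 ≤ η' * w r := mul_nonneg (le_of_lt hη') (le_of_lt (Real.exp_pos _))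
        linarith
  refine le_trans (mul_le_mul_of_nonneg_left hbound (le_of_lt (inv_pos.mpr hc))) ?_
  rw [integral_add (hw.const_mul η') (hv.const_mul _), integral_const_mul, integral_const_mul,
    hwint, hvint]
  rw [mul_add]
  apply le_of_eq
  field_simp
  ring


end ExpSmoothingAux

set_option maxHeartbeats 1000000 in
open Set Real Function in
/-- Uniform convergence of the exponential smoothing: with `Q` a continuous strictly
increasing clock (`Q(0) = 0`, `Q(t) → ∞`) and `G` bounded measurable and continuous,
`sup_{s∈[0,T]} |G_s^ε − G_s| → 0` as `ε → 0⁺`, where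
`G_s^ε = (1/Q(ε)) ∫_{s∨ε}^∞ e^{−(Q(r)−Q(s∨ε))/Q(ε)} G(r) dQ(r)`. -/
theorem stmt_17 (m : ℕ) (Q : StieltjesFunction ℝ) (hQc : Continuous Q)
    (hQmono : StrictMonoOn Q (Set.Ici 0)) (hQ0 : Q 0 = 0)
    (hQtop : Tendsto (fun t => Q t) atTop atTop)
    (G : ℝ → EuclideanSpace ℝ (Fin m)) (hG : Measurable G) (hGc : Continuous G)
    (C : ℝ) (hbdd : ∀ r, ‖G r‖ ≤ C)
    (T : ℝ) (hT : 0 < T) :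
    Tendsto (fun ε : ℝ => ⨆ s : Set.Icc (0 : ℝ) T,
        ‖((Q ε)⁻¹ • ∫ r in Set.Ici (max (s : ℝ) ε),
            Real.exp (-(Q r - Q (max (s : ℝ) ε)) / Q ε) • G r ∂Q.measure) - G s‖)
      (nhdsWithin 0 (Set.Ioi 0)) (nhds 0) := by
  have hC : 0 ≤ C := le_trans (norm_nonneg _) (hbdd 0)
  haveI : Nonempty (Set.Icc (0 : ℝ) T) := Set.Nonempty.to_subtype (Set.nonempty_Icc.mpr hT.le)
  rw [tendsto_order]
  constructor
  · intro a ha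
    exact Eventually.of_forall fun ε =>
      lt_of_lt_of_le ha (Real.iSup_nonneg fun s => norm_nonneg _)
  · intro η hη
    set η' := η/4 with hη'_def
    have hη' : 0 < η' := by positivity
    -- time modulus
    obtain ⟨δ₂, hδ₂pos, hδ₂⟩ := modulus (isCompact_Icc : IsCompact (Icc (0:ℝ) (T+1))) hGc
      continuous_id (fun x _ y _ h => h) hη'
    -- choose R with Q R large
    obtain ⟨R₀, hR₀⟩ := (hQtop.eventually_ge_atTop (Q (T+1) + 2)).exists
    set R := max R₀ (T+1) with hR_def
    have hR1 : T+1 ≤ R := le_max_right _ _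
    have hR2 : Q (T+1) + 2 ≤ Q R := le_trans hR₀ (Q.mono (le_max_left _ _))
    -- Q-clock modulus on [0,R]
    obtain ⟨δ₁, hδ₁pos, hδ₁⟩ := modulus (isCompact_Icc : IsCompact (Icc (0:ℝ) R)) hGc hQc
      (fun x hx y hy h => hQmono.injOn hx.1 hy.1 h) hη'
    set δ := min δ₁ 1 with hδ_def
    have hδpos : 0 < δ := lt_min hδ₁pos one_pos
    -- eventual facts
    have hev1 : ∀ᶠ ε in nhdsWithin (0:ℝ) (Set.Ioi 0), ε ∈ Ioc (0:ℝ) (min δ₂ 1) :=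
      Ioc_mem_nhdsGT_of_mem ⟨le_refl 0, lt_min hδ₂pos one_pos⟩
    have hQto0 : Tendsto (fun ε => Q ε) (nhdsWithin (0:ℝ) (Set.Ioi 0)) (nhds 0) := by
      have h := (hQc.tendsto 0).mono_left (nhdsWithin_le_nhds (s := Set.Ioi (0:ℝ)))
      rwa [hQ0] at h
    have hQpos : ∀ᶠ ε in nhdsWithin (0:ℝ) (Set.Ioi 0), Q ε ∈ Set.Ioi (0:ℝ) := by
      filter_upwards [self_mem_nhdsWithin] with ε hε
      rw [Set.mem_Ioi, ← hQ0]
      exact hQmono (Set.mem_Ici.mpr le_rfl) (Set.mem_Ici.mpr (le_of_lt hε)) hε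
    have hQ0' : Tendsto (fun ε => Q ε) (nhdsWithin (0:ℝ) (Set.Ioi 0))
        (nhdsWithin (0:ℝ) (Set.Ioi 0)) := tendsto_nhdsWithin_iff.mpr ⟨hQto0, hQpos⟩
    have h1 : Tendsto (fun c : ℝ => -δ/(2*c)) (nhdsWithin (0:ℝ) (Set.Ioi 0)) atBot := by
      have heq : ∀ c : ℝ, -δ/(2*c) = -((δ/2) * c⁻¹) := fun c => by
        rw [div_eq_mul_inv, mul_inv]; ring
      simp_rw [heq]
      rw [tendsto_neg_atBot_iff]
      exact tendsto_inv_nhdsGT_zero.const_mul_atTop (by positivity)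
    have h2 : Tendsto (fun c : ℝ => Real.exp (-δ/(2*c))) (nhdsWithin (0:ℝ) (Set.Ioi 0))
        (nhds 0) := Real.tendsto_exp_atBot.comp h1
    have htail : Tendsto (fun ε : ℝ => 4*C*Real.exp (-δ/(2*Q ε)))
        (nhdsWithin (0:ℝ) (Set.Ioi 0)) (nhds 0) := by
      have := (h2.comp hQ0').const_mul (4*C)
      simpa using this
    have hev2 : ∀ᶠ ε in nhdsWithin (0:ℝ) (Set.Ioi 0), 4*C*Real.exp (-δ/(2*Q ε)) < η' :=
      htail.eventually (eventually_lt_nhds hη')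
    filter_upwards [hev1, hev2] with ε hε1 hε2
    have hεpos : 0 < ε := hε1.1
    have hε1' : ε ≤ 1 := le_trans hε1.2 (min_le_right _ _)
    have hεδ₂ : ε ≤ δ₂ := le_trans hε1.2 (min_le_left _ _)
    have hc : 0 < Q ε := by
      rw [← hQ0]
      exact hQmono (Set.mem_Ici.mpr le_rfl) (Set.mem_Ici.mpr (le_of_lt hεpos)) hεpos
    refine lt_of_le_of_lt (ciSup_le fun s => ?_) (by linarith : η' + 4*C*Real.exp (-δ/(2*Q ε)) + η' < η)
    set t := max (s : ℝ) ε with ht_def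
    have hs0 : (0:ℝ) ≤ s := s.2.1
    have hsT : (s:ℝ) ≤ T := s.2.2
    have ht0 : 0 ≤ t := le_trans hs0 (le_max_left _ _)
    have htT1 : t ≤ T + 1 := max_le (by linarith) (by linarith)
    -- closeness of G t and G s
    have hGts : ‖G t - G (s:ℝ)‖ ≤ η' := by
      refine hδ₂ t ⟨ht0, htT1⟩ (s:ℝ) ⟨hs0, by linarith⟩ ?_
      rw [id_eq, id_eq, abs_of_nonneg (sub_nonneg.mpr (le_max_left _ _))]
      calc t - (s:ℝ) ≤ (s:ℝ) + ε - s := by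
            have : t ≤ (s:ℝ) + ε := max_le (by linarith) (by linarith)
            linarith
        _ = ε := by ring
        _ ≤ δ₂ := hεδ₂
    -- modulus hypothesis
    have hmod : ∀ r, t ≤ r → Q r - Q t ≤ δ → ‖G r - G t‖ ≤ η' := by
      intro r hr hQr
      have hr0 : 0 ≤ r := le_trans ht0 hr
      have htR : t ≤ R := by linarith
      have hrR : r ≤ R := by
        by_contra h
        push_neg at h
        have hQrR : Q R < Q r := hQmono (Set.mem_Ici.mpr (by linarith))
          (Set.mem_Ici.mpr hr0) h
        have hQtT : Q t ≤ Q (T+1) := Q.mono htT1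
        have hδ1 : δ ≤ 1 := min_le_right _ _
        linarith
      refine hδ₁ r ⟨hr0, hrR⟩ t ⟨ht0, htR⟩ ?_
      rw [abs_of_nonneg (sub_nonneg.mpr (Q.mono hr))]
      exact le_trans hQr (min_le_left _ _)
    have key := smooth_close m Q hQc hQmono hQ0 hQtop G hGc C hC hbdd ht0 hc hδpos hη' hmod
    calc ‖((Q ε)⁻¹ • ∫ r in Set.Ici t, Real.exp (-(Q r - Q t) / Q ε) • G r ∂Q.measure) - G (s:ℝ)‖
        ≤ ‖((Q ε)⁻¹ • ∫ r in Set.Ici t, Real.exp (-(Q r - Q t) / Q ε) • G r ∂Q.measure) - G t‖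
          + ‖G t - G (s:ℝ)‖ := norm_sub_le_norm_sub_add_norm_sub _ _ _
      _ ≤ (η' + 4*C*Real.exp (-δ/(2*Q ε))) + η' := add_le_add key hGts
      _ = η' + 4*C*Real.exp (-δ/(2*Q ε)) + η' := by ring
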